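/- (Lemma 3.2) Let (μ_N)_{N≥0} be a nonnegative real sequence satisfying μ_N² ≤ T_N + Σ_{n=1}^N σ_n μ_n for all N ≥ 1, where (T_N)_{N≥0} is a nondecreasing real sequence with T_0 ≥ μ_0², and σ_n ≥ 0 for all n. Then for all N ≥ 1: μ_N ≤ (1/2)Σ_{n=1}^N σ_n + (T_N + ((1/2)Σ_{n=1}^N σ_n)²)^{1/2}. -/

import Mathlib

open Finset

/-- Lemma 3.2 (a technical recursion lemma). -/
theorem recursion_bound (μ T σ : ℕ → ℝ)
    (hμ : ∀ N, 0 ≤ μ N)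
    (hrec : ∀ N, 1 ≤ N → μ N ^ 2 ≤ T N + ∑ n ∈ Finset.Icc 1 N, σ n * μ n)
    (hT : Monotone T) (hT0 : μ 0 ^ 2 ≤ T 0)
    (hσ : ∀ n, 0 ≤ σ n) :
    ∀ N, 1 ≤ N →
      μ N ≤ (1 / 2) * ∑ n ∈ Finset.Icc 1 N, σ n +
        Real.sqrt (T N + ((1 / 2) * ∑ n ∈ Finset.Icc 1 N, σ n) ^ 2) := by
  intro N hN
  set A : ℝ := (1 / 2) * ∑ n ∈ Finset.Icc 1 N, σ n with hA
  have hS : 0 ≤ ∑ n ∈ Finset.Icc 1 N, σ n :=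
    Finset.sum_nonneg fun n _ => hσ n
  have hA0 : 0 ≤ A := by positivity
  -- M : the max of μ over Icc 0 N
  obtain ⟨n0, hn0mem, hn0max⟩ :=
    Finset.exists_max_image (Finset.Icc 0 N) μ ⟨0, by simp⟩
  set M : ℝ := μ n0 with hM
  have hM0 : 0 ≤ M := hμ n0
  have hμN : μ N ≤ M := hn0max N (by simp)
  have hTN0 : 0 ≤ T N := le_trans (le_trans (sq_nonneg _) hT0) (hT (Nat.zero_le N))
  -- key quadratic inequality
  have hkey : M ^ 2 ≤ T N + 2 * A * M := by
    rcases Nat.eq_zero_or_pos n0 with h0 | h1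
    · have : M ^ 2 ≤ T 0 := by rw [hM, h0]; exact hT0
      have := le_trans this (hT (Nat.zero_le N))
      nlinarith [mul_nonneg hA0 hM0]
    · have hsub : Finset.Icc 1 n0 ⊆ Finset.Icc 1 N := by
        apply Finset.Icc_subset_Icc_right
        exact (Finset.mem_Icc.mp hn0mem).2
      have h1' : M ^ 2 ≤ T n0 + ∑ n ∈ Finset.Icc 1 n0, σ n * μ n := hrec n0 h1
      have h2 : ∑ n ∈ Finset.Icc 1 n0, σ n * μ n ≤ ∑ n ∈ Finset.Icc 1 N, σ n * μ n :=
        Finset.sum_le_sum_of_subset_of_nonneg hsub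
          (fun n _ _ => mul_nonneg (hσ n) (hμ n))
      have h3 : ∑ n ∈ Finset.Icc 1 N, σ n * μ n ≤ ∑ n ∈ Finset.Icc 1 N, σ n * M := by
        apply Finset.sum_le_sum
        intro n hn
        have hnN : n ∈ Finset.Icc 0 N := by
          simp only [Finset.mem_Icc] at hn ⊢; omega
        exact mul_le_mul_of_nonneg_left (hn0max n hnN) (hσ n)
      have h4 : ∑ n ∈ Finset.Icc 1 N, σ n * M = 2 * A * M := by
        rw [← Finset.sum_mul, hA]; ring
      have hTle : T n0 ≤ T N := hT (Finset.mem_Icc.mp hn0mem).2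
      linarith
  -- solve the quadratic: (M - A)^2 ≤ T N + A^2
  have hsq : (M - A) ^ 2 ≤ T N + A ^ 2 := by nlinarith
  have hMle : M ≤ A + Real.sqrt (T N + A ^ 2) := by
    have := Real.sqrt_le_sqrt hsq
    rw [Real.sqrt_sq_eq_abs] at this
    have := le_trans (le_abs_self (M - A)) this
    linarith
  exact le_trans hμN hMle
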